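/- Let n ≥ 1 be an integer, ε = (ε_1, …, ε_{2n}) ∈ {±1}^{2n}, and let A be a 2n×2n real SSR(ε) matrix. Then there exists a row vector r ∈ ℝ^{2n} such that the (2n+1)×2n matrix obtained by inserting r as a new row between the n-th and (n+1)-th rows of A is SSR(ε). -/

import Mathlib

open Finset

/-- `A` is strictly sign regular of order `p` with sign pattern `ε` (`SSR_p(ε)`):
for every `k ∈ {1, …, p}` (here `k = kk.val + 1` for `kk : Fin p`), every `k × k` minor of `A`
(the determinant of the submatrix on any `k` rows and `k` columns taken in increasing order)
has sign `ε k`, i.e. `ε k` times the minor is strictly positive. -/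
def IsSSRp (p : ℕ) {m n : ℕ} (A : Matrix (Fin m) (Fin n) ℝ) (ε : Fin p → ℝ) : Prop :=
  ∀ (kk : Fin p) (r : Fin (kk.val + 1) → Fin m) (c : Fin (kk.val + 1) → Fin n),
    StrictMono r → StrictMono c → 0 < ε kk * (A.submatrix r c).det

abbrev MinorIdx (N : ℕ) := Σ kk : Fin N, (Fin (kk.val+1) → Fin N) × (Fin (kk.val+1) → Fin N)

instance {k N : ℕ} (f : Fin k → Fin N) : Decidable (StrictMono f) :=
  decidable_of_iff (∀ a b : Fin k, a < b → f a < f b) Iff.rfl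

lemma strictMono_const_fin1 {N : ℕ} (c : Fin N) : StrictMono (fun _ : Fin 1 => c) :=
  fun a b hab => absurd (Subsingleton.elim a b) (ne_of_lt hab)

def shiftB (i0 d i : ℕ) : ℕ :=
  if i0 - d ≤ i ∧ i ≤ i0 then (if i = i0 - d then i0 else i - 1) else i

def shiftF (i0 d i : ℕ) : ℕ :=
  if i0 ≤ i ∧ i ≤ i0 + d then (if i = i0 + d then i0 else i + 1) else i

lemma shiftB_lt {k : ℕ} {i0 d i : ℕ} (hi : i < k) (h0 : i0 < k) : shiftB i0 d i < k := by
  unfold shiftB; split_ifs <;> omega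

lemma shiftF_lt {k : ℕ} {i0 d i : ℕ} (hi : i < k) (h0 : i0 + d < k) : shiftF i0 d i < k := by
  unfold shiftF; split_ifs <;> omega

lemma swap_val {m : ℕ} (a b i : Fin m) :
    ((Equiv.swap a b) i).val = if i.val = a.val then b.val
      else if i.val = b.val then a.val else i.val := by
  simp [Equiv.swap_apply_def, Fin.ext_iff, apply_ite Fin.val]

lemma shiftB_succ (i0 d i : ℕ) (hd : d + 1 ≤ i0) :
    shiftB i0 (d+1) i
      = shiftB i0 d (if i = i0 - (d+1) then i0 - d else if i = i0 - d then i0 - (d+1) else i) := by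
  unfold shiftB; split_ifs <;> omega

lemma shiftF_succ (i0 d i : ℕ) :
    shiftF i0 (d+1) i
      = shiftF i0 d (if i = i0 + (d+1) then i0 + d else if i = i0 + d then i0 + (d+1) else i) := by
  unfold shiftF; split_ifs <;> omega

lemma det_shift_back {k N M' : ℕ} (A : Matrix (Fin N) (Fin M') ℝ) (γ : Fin (k+1) → Fin M')
    (τ : Fin (k+1) → Fin N) (i0 : Fin (k+1)) (d : ℕ) (hd : d ≤ i0.val) :
    (A.submatrix τ γ).det =
      (-1 : ℝ)^d *
        (A.submatrix (fun i => τ ⟨shiftB i0.val d i.val, shiftB_lt i.isLt i0.isLt⟩) γ).det := by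
  induction d with
  | zero =>
    rw [pow_zero, one_mul]
    congr 1
    ext i j
    simp only [Matrix.submatrix_apply]
    congr 2
    apply Fin.ext
    show i.val = shiftB i0.val 0 i.val
    unfold shiftB; split_ifs <;> omega
  | succ d ih =>
    rw [ih (by omega), pow_succ]
    have hkey : (A.submatrix (fun i : Fin (k+1) =>
          τ ⟨shiftB i0.val (d+1) i.val, shiftB_lt i.isLt i0.isLt⟩) γ)
        = (A.submatrix (fun i : Fin (k+1) =>
            τ ⟨shiftB i0.val d i.val, shiftB_lt i.isLt i0.isLt⟩) γ).submatrix
          (Equiv.swap (⟨i0.val - (d+1), by omega⟩ : Fin (k+1)) ⟨i0.val - d, by omega⟩) id := by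
      ext i j
      simp only [Matrix.submatrix_apply, id]
      congr 2
      apply Fin.ext
      show shiftB i0.val (d+1) i.val = shiftB i0.val d _
      rw [swap_val]
      simp only []
      rw [shiftB_succ i0.val d i.val hd]
    rw [hkey, Matrix.det_permute, Equiv.Perm.sign_swap (by
      intro h
      have := congrArg Fin.val h
      simp only [] at this
      omega)]
    push_cast
    ring

lemma det_shift_fwd {k N M' : ℕ} (A : Matrix (Fin N) (Fin M') ℝ) (γ : Fin (k+1) → Fin M')
    (τ : Fin (k+1) → Fin N) (i0 : Fin (k+1)) (d : ℕ) (hd : i0.val + d < k + 1) :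
    (A.submatrix τ γ).det =
      (-1 : ℝ)^d *
        (A.submatrix (fun i => τ ⟨shiftF i0.val d i.val, shiftF_lt i.isLt hd⟩) γ).det := by
  induction d with
  | zero =>
    rw [pow_zero, one_mul]
    congr 1
    ext i j
    simp only [Matrix.submatrix_apply]
    congr 2
    apply Fin.ext
    show i.val = shiftF i0.val 0 i.val
    unfold shiftF; split_ifs <;> omega
  | succ d ih =>
    rw [ih (by omega), pow_succ]
    have hkey : (A.submatrix (fun i : Fin (k+1) =>
          τ ⟨shiftF i0.val (d+1) i.val, shiftF_lt i.isLt hd⟩) γ)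
        = (A.submatrix (fun i : Fin (k+1) =>
            τ ⟨shiftF i0.val d i.val, shiftF_lt i.isLt (by omega)⟩) γ).submatrix
          (Equiv.swap (⟨i0.val + (d+1), by omega⟩ : Fin (k+1)) ⟨i0.val + d, by omega⟩) id := by
      ext i j
      simp only [Matrix.submatrix_apply, id]
      congr 2
      apply Fin.ext
      show shiftF i0.val (d+1) i.val = shiftF i0.val d _
      rw [swap_val]
      simp only []
      rw [shiftF_succ i0.val d i.val]
    rw [hkey, Matrix.det_permute, Equiv.Perm.sign_swap (by
      intro h
      have := congrArg Fin.val h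
      simp only [] at this
      omega)]
    push_cast
    ring

lemma det_updateRow_finset_sum {k : ℕ} (M : Matrix (Fin k) (Fin k) ℝ) (i0 : Fin k)
    {α : Type*} [DecidableEq α] (s : Finset α) (v : α → Fin k → ℝ) :
    (M.updateRow i0 (fun j => ∑ L ∈ s, v L j)).det
      = ∑ L ∈ s, (M.updateRow i0 (v L)).det := by
  induction s using Finset.induction with
  | empty =>
    simp only [Finset.sum_empty]
    exact Matrix.det_eq_zero_of_row_eq_zero i0 (fun j => by simp)
  | @insert a s ha ih =>
    have h : (fun j => ∑ L ∈ insert a s, v L j) = v a + fun j => ∑ L ∈ s, v L j := by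
      funext j; simp [Finset.sum_insert ha]
    rw [h, Matrix.det_updateRow_add, ih, Finset.sum_insert ha]

lemma det_updateRow_mul (k : ℕ) (M : Matrix (Fin k) (Fin k) ℝ) (i0 : Fin k)
    (c : ℝ) (w : Fin k → ℝ) :
    (M.updateRow i0 (fun j => c * w j)).det = c * (M.updateRow i0 w).det := by
  have h : (fun j => c * w j) = c • w := by funext j; simp
  rw [h, Matrix.det_updateRow_smul]

lemma geom_half_le {δ : ℝ} (h0 : 0 ≤ δ) (h2 : δ ≤ 1/2) (m : ℕ) :
    ∑ j ∈ Finset.range m, δ ^ j ≤ 2 := by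
  induction m with
  | zero => norm_num
  | succ m ih =>
    have hnn : (0:ℝ) ≤ ∑ j ∈ Finset.range m, δ ^ j :=
      Finset.sum_nonneg fun j _ => pow_nonneg h0 j
    rw [Finset.sum_range_succ']
    simp only [pow_succ, pow_zero]
    have h : ∑ i ∈ Finset.range m, δ ^ i * δ = (∑ i ∈ Finset.range m, δ ^ i) * δ :=
      (Finset.sum_mul ..).symm
    rw [h]
    nlinarith

set_option maxHeartbeats 2000000 in
theorem stmt_12 (n : ℕ) (hn : 1 ≤ n) (ε : Fin (2 * n) → ℝ)
    (hε : ∀ i, ε i = 1 ∨ ε i = -1)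
    (A : Matrix (Fin (2 * n)) (Fin (2 * n)) ℝ) (hA : IsSSRp (2 * n) A ε) :
    ∃ r : Fin (2 * n) → ℝ,
      IsSSRp (2 * n)
        ((Matrix.of (Fin.insertNth (⟨n, by omega⟩ : Fin (2 * n + 1)) r (fun i => A i))) :
          Matrix (Fin (2 * n + 1)) (Fin (2 * n)) ℝ) ε := by
  classical
  have h2n : 1 ≤ 2*n := by omega
  -- the maximum M of all |minors| (over arbitrary index maps)
  have hIdxne : (Finset.univ : Finset (MinorIdx (2*n))).Nonempty :=
    ⟨⟨⟨0, by omega⟩, fun _ => ⟨0, by omega⟩, fun _ => ⟨0, by omega⟩⟩, Finset.mem_univ _⟩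
  set M : ℝ := Finset.univ.sup' hIdxne
    (fun x : MinorIdx (2*n) => |(A.submatrix x.2.1 x.2.2).det|) with hMdef
  have hMle : ∀ (kk : Fin (2*n)) (f g : Fin (kk.val+1) → Fin (2*n)),
      |(A.submatrix f g).det| ≤ M := by
    intro kk f g
    rw [hMdef]
    exact Finset.le_sup' (fun x : MinorIdx (2*n) => |(A.submatrix x.2.1 x.2.2).det|)
      (Finset.mem_univ (⟨kk, f, g⟩ : MinorIdx (2*n)))
  have hM0 : 0 ≤ M :=
    le_trans (abs_nonneg _) (hMle ⟨0, by omega⟩ (fun _ => ⟨0, by omega⟩) (fun _ => ⟨0, by omega⟩))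
  -- the minimum m0 of signed strictly monotone minors
  set sm : Finset (MinorIdx (2*n)) :=
    Finset.univ.filter (fun x => StrictMono x.2.1 ∧ StrictMono x.2.2) with hsmdef
  have hsmne : sm.Nonempty := by
    refine ⟨⟨⟨0, by omega⟩, fun _ => ⟨0, by omega⟩, fun _ => ⟨0, by omega⟩⟩, ?_⟩
    rw [hsmdef, Finset.mem_filter]
    exact ⟨Finset.mem_univ _, strictMono_const_fin1 _, strictMono_const_fin1 _⟩
  set m0 : ℝ := sm.inf' hsmne (fun x => ε x.1 * (A.submatrix x.2.1 x.2.2).det) with hm0def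
  have hm0le : ∀ (kk : Fin (2*n)) (f g : Fin (kk.val+1) → Fin (2*n)),
      StrictMono f → StrictMono g → m0 ≤ ε kk * (A.submatrix f g).det := by
    intro kk f g hf hg
    have hmem : (⟨kk, f, g⟩ : MinorIdx (2*n)) ∈ sm := by
      rw [hsmdef, Finset.mem_filter]
      exact ⟨Finset.mem_univ _, hf, hg⟩
    rw [hm0def]
    exact Finset.inf'_le (fun x : MinorIdx (2*n) => ε x.1 * (A.submatrix x.2.1 x.2.2).det) hmem
  have hm0pos : 0 < m0 := by
    rw [hm0def, Finset.lt_inf'_iff]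
    intro x hx
    rw [hsmdef, Finset.mem_filter] at hx
    exact hA x.1 x.2.1 x.2.2 hx.2.1 hx.2.2
  -- δ
  set δ : ℝ := min (1/2) (m0/(5*M+1)) with hδdef
  have hδ0 : 0 < δ := lt_min (by norm_num) (div_pos hm0pos (by linarith))
  have hδh : δ ≤ 1/2 := min_le_left _ _
  have hδM : 4*M*δ < m0 := by
    have h1 : δ ≤ m0/(5*M+1) := min_le_right _ _
    have h2 : (0:ℝ) < 5*M+1 := by linarith
    rw [le_div_iff₀ h2] at h1
    nlinarith
  -- the row
  set lo : ℕ → Fin (2*n) := fun L => ⟨n-1-L, by omega⟩ with hlodef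
  set hi : ℕ → Fin (2*n) := fun L => ⟨min (n+L) (2*n-1), by omega⟩ with hhidef
  have hloval : ∀ L, (lo L).val = n-1-L := fun L => by rw [hlodef]
  have hhival : ∀ L, L < n → (hi L).val = n + L := by
    intro L hL; rw [hhidef]; simp only [Fin.val_mk]; omega
  set rr : Fin (2*n) → ℝ :=
    fun c => ∑ L ∈ Finset.range n, (-δ)^L * (A (lo L) c + A (hi L) c) with hrrdef
  refine ⟨rr, ?_⟩
  intro kk ρ γ hρ hγ
  set p : Fin (2*n+1) := ⟨n, by omega⟩ with hpdef
  have hpval : p.val = n := rfl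
  set u : Fin (2*n+1) → Fin (2*n) :=
    fun j => if h : j.val < n then ⟨j.val, by omega⟩ else ⟨j.val - 1, by omega⟩ with hudef
  have huval : ∀ j, (u j).val = if j.val < n then j.val else j.val - 1 := by
    intro j; simp only [hudef]; split_ifs <;> rfl
  have hsa : ∀ m : Fin (2*n), (p.succAbove m).val = if m.val < n then m.val else m.val + 1 := by
    intro m
    rw [Fin.succAbove]
    by_cases h : m.val < n
    · rw [if_pos (by rw [Fin.lt_def, hpval, Fin.coe_castSucc]; exact h), if_pos h,
        Fin.coe_castSucc]
    · rw [if_neg (by rw [Fin.lt_def, hpval, Fin.coe_castSucc]; exact h), if_neg h, Fin.val_succ]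
  have hBrow : ∀ j : Fin (2*n+1), j ≠ p →
      (Fin.insertNth p rr (fun i => A i) : Fin (2*n+1) → Fin (2*n) → ℝ) j = A (u j) := by
    intro j hj
    have hjval : j.val ≠ n := fun h => hj (Fin.ext (h.trans hpval.symm))
    have hjlt := j.isLt
    have h1 : p.succAbove (u j) = j := by
      apply Fin.ext
      rw [hsa (u j), huval j]
      split_ifs <;> omega
    conv_lhs => rw [← h1]
    exact Fin.insertNth_apply_succAbove (α := fun _ : Fin (2*n+1) => Fin (2*n) → ℝ) p rr (fun i => A i) (u j)
  show 0 < ε kk * ((Matrix.of (Fin.insertNth p rr fun i => A i)).submatrix ρ γ).det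
  by_cases hcase : ∃ i0, ρ i0 = p
  case neg =>
    have hne : ∀ i, ρ i ≠ p := by push_neg at hcase; exact hcase
    have hρ0 : StrictMono (fun i => u (ρ i)) := by
      intro a b hab
      have h1 := Fin.lt_def.mp (hρ hab)
      rw [Fin.lt_def, huval, huval]
      have h2 : (ρ a).val ≠ n := fun h => hne a (Fin.ext (h.trans hpval.symm))
      have h3 : (ρ b).val ≠ n := fun h => hne b (Fin.ext (h.trans hpval.symm))
      have h4 := (ρ a).isLt
      have h5 := (ρ b).isLt
      split_ifs <;> omega
    have heq : (Matrix.of (Fin.insertNth p rr fun i => A i)).submatrix ρ γ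
        = A.submatrix (fun i => u (ρ i)) γ := by
      ext i j
      simp only [Matrix.submatrix_apply, Matrix.of_apply]
      rw [hBrow (ρ i) (hne i)]
    rw [heq]
    exact hA kk _ γ hρ0 hγ
  case pos =>
    obtain ⟨i0, hi0⟩ := hcase
    have hi0val : (ρ i0).val = n := by rw [hi0]
    have hkk := kk.isLt
    have hi0lt := i0.isLt
    set τ : Fin (kk.val+1) → Fin (2*n) := fun i => u (ρ i) with hτdef
    have hτval : ∀ i, (τ i).val = if (ρ i).val < n then (ρ i).val else (ρ i).val - 1 := by
      intro i; rw [hτdef]; exact huval (ρ i)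
    have hρv : ∀ a b : Fin (kk.val+1), a.val < b.val → (ρ a).val < (ρ b).val :=
      fun a b h => Fin.lt_def.mp (hρ (Fin.lt_def.mpr h))
    have key1 : (Matrix.of (Fin.insertNth p rr fun i => A i)).submatrix ρ γ
        = (A.submatrix τ γ).updateRow i0 (fun j => rr (γ j)) := by
      ext i j
      by_cases h : i = i0
      · rw [h, Matrix.updateRow_self]
        show (Fin.insertNth p rr (fun i => A i) : Fin (2*n+1) → Fin (2*n) → ℝ) (ρ i0) (γ j)
          = rr (γ j)
        rw [hi0, Fin.insertNth_apply_same]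
      · rw [Matrix.updateRow_ne h]
        show (Fin.insertNth p rr (fun i => A i) : Fin (2*n+1) → Fin (2*n) → ℝ) (ρ i) (γ j)
          = (A.submatrix τ γ) i j
        rw [hBrow (ρ i) (fun he => h (hρ.injective (he.trans hi0.symm)))]
        rfl
    set D : Fin (2*n) → ℝ :=
      fun q => ((A.submatrix τ γ).updateRow i0 (fun j => A q (γ j))).det with hDdef
    have key2 : ((Matrix.of (Fin.insertNth p rr fun i => A i)).submatrix ρ γ).det
        = ∑ L ∈ Finset.range n, (-δ)^L * (D (lo L) + D (hi L)) := by
      rw [key1]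
      have h1 : (fun j => rr (γ j)) = fun j => ∑ L ∈ Finset.range n,
          ((-δ)^L * (A (lo L) (γ j) + A (hi L) (γ j))) := by
        funext j; rw [hrrdef]
      rw [h1, det_updateRow_finset_sum]
      refine Finset.sum_congr rfl (fun L hL => ?_)
      rw [det_updateRow_mul]
      congr 1
      have h2 : (fun j => A (lo L) (γ j) + A (hi L) (γ j))
          = (fun j => A (lo L) (γ j)) + (fun j => A (hi L) (γ j)) := rfl
      rw [h2, Matrix.det_updateRow_add]
    have hDsub : ∀ q, (A.submatrix τ γ).updateRow i0 (fun j => A q (γ j))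
        = A.submatrix (Function.update τ i0 q) γ := by
      intro q; ext i j
      by_cases h : i = i0
      · rw [h, Matrix.updateRow_self]
        show A q (γ j) = A (Function.update τ i0 q i0) (γ j)
        rw [Function.update_self]
      · rw [Matrix.updateRow_ne h]
        show A (τ i) (γ j) = A (Function.update τ i0 q i) (γ j)
        rw [Function.update_of_ne h]
    have hDM : ∀ q, |D q| ≤ M := by
      intro q
      rw [hDdef]
      show |((A.submatrix τ γ).updateRow i0 fun j => A q (γ j)).det| ≤ M
      rw [hDsub q]
      exact hMle kk _ γ
    have hD0 : ∀ q, (∃ i, i.val ≠ i0.val ∧ τ i = q) → D q = 0 := by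
      rintro q ⟨i, hne2, heq⟩
      have hne3 : i ≠ i0 := fun h => hne2 (congrArg Fin.val h)
      rw [hDdef]
      show ((A.submatrix τ γ).updateRow i0 fun j => A q (γ j)).det = 0
      rw [hDsub q]
      refine Matrix.det_zero_of_row_eq hne3 ?_
      funext j
      show A (Function.update τ i0 q i) (γ j) = A (Function.update τ i0 q i0) (γ j)
      rw [Function.update_of_ne hne3, Function.update_self, heq]
    -- the maximal block
    obtain ⟨Q, hQdef⟩ : ∃ Q' : ℕ → Prop, Q' = (fun L => L ≤ n ∧ L ≤ i0.val ∧
        i0.val + L < kk.val + 1 ∧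
        ∀ j, j < L → ((ρ ⟨i0.val - 1 - j, by omega⟩).val = n - 1 - j ∧
          ∀ h : i0.val + 1 + j < kk.val + 1, (ρ ⟨i0.val + 1 + j, h⟩).val = n + 1 + j)) :=
      ⟨_, rfl⟩
    obtain ⟨Lstar, hLsdef⟩ : ∃ L, L = Nat.findGreatest Q n := ⟨_, rfl⟩
    have hQ0 : Q 0 := by
      rw [hQdef]
      exact ⟨Nat.zero_le n, Nat.zero_le _, by omega, fun j hj => absurd hj (by omega)⟩
    have hQL : Q Lstar := by
      rw [hLsdef]
      exact Nat.findGreatest_spec (Nat.zero_le n) hQ0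
    rw [hQdef] at hQL
    obtain ⟨hLn, hLi0, hLk, hblock⟩ := hQL
    have hLlt : Lstar < n := by omega
    have hnQ : ¬ Q (Lstar + 1) := Nat.findGreatest_is_greatest (by rw [← hLsdef]; omega) (by omega)
    rw [hQdef] at hnQ
    -- positions inside the block
    have hbb : ∀ w : Fin (kk.val+1), ∀ j, j < Lstar → w.val = i0.val - 1 - j →
        (ρ w).val = n - 1 - j := by
      intro w j hj hwv
      have hidx : w = (⟨i0.val - 1 - j, by omega⟩ : Fin (kk.val+1)) :=
        Fin.ext (by show w.val = i0.val - 1 - j; omega)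
      conv_lhs => rw [hidx]
      exact (hblock j hj).1
    have hbb' : ∀ w : Fin (kk.val+1), ∀ j, j < Lstar → w.val = i0.val + 1 + j →
        (ρ w).val = n + 1 + j := by
      intro w j hj hwv
      have hlt : i0.val + 1 + j < kk.val + 1 := by omega
      have hidx : w = (⟨i0.val + 1 + j, hlt⟩ : Fin (kk.val+1)) :=
        Fin.ext (by show w.val = i0.val + 1 + j; omega)
      conv_lhs => rw [hidx]
      exact (hblock j hj).2 hlt
    have hup : ∀ w : Fin (kk.val+1), w.val = i0.val - Lstar → (ρ w).val = n - Lstar := by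
      intro w hwv
      rcases Nat.eq_zero_or_pos Lstar with h|h
      · have hidx : w = i0 := Fin.ext (by omega)
        rw [hidx]; omega
      · have := hbb w (Lstar - 1) (by omega) (by omega)
        omega
    have hdown : ∀ w : Fin (kk.val+1), w.val = i0.val + Lstar → (ρ w).val = n + Lstar := by
      intro w hwv
      rcases Nat.eq_zero_or_pos Lstar with h|h
      · have hidx : w = i0 := Fin.ext (by omega)
        rw [hidx]; omega
      · have := hbb' w (Lstar - 1) (by omega) (by omega)
        omega
    -- presence of the low neighbour forces its position
    have hlopos : (∃ i : Fin (kk.val+1), i.val ≠ i0.val ∧ (ρ i).val = n - 1 - Lstar) →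
        Lstar + 1 ≤ i0.val ∧
          ∀ w : Fin (kk.val+1), w.val = i0.val - 1 - Lstar → (ρ w).val = n - 1 - Lstar := by
      rintro ⟨i, hne2, hvi⟩
      have hilt2 := i.isLt
      have hilt : i.val < i0.val := by
        rcases Nat.lt_or_ge i.val i0.val with h|h
        · exact h
        · exfalso
          have := hρv i0 i (by omega)
          omega
      have hge : Lstar + 1 ≤ i0.val := by
        by_contra hcon
        have := hbb i (i0.val - 1 - i.val) (by omega) (by omega)
        omega
      have hival : i.val = i0.val - 1 - Lstar := by
        by_contra hcon
        rcases Nat.lt_or_ge i.val (i0.val - 1 - Lstar) with h|h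
        · obtain ⟨w1, hw1⟩ : ∃ w : Fin (kk.val+1), w.val = i0.val - 1 - Lstar :=
            ⟨⟨_, by omega⟩, rfl⟩
          obtain ⟨w2, hw2⟩ : ∃ w : Fin (kk.val+1), w.val = i0.val - Lstar :=
            ⟨⟨_, by omega⟩, rfl⟩
          have h1 := hρv i w1 (by omega)
          have h2 := hρv w1 w2 (by omega)
          have h3 := hup w2 hw2
          omega
        · have := hbb i (i0.val - 1 - i.val) (by omega) (by omega)
          omega
      refine ⟨hge, fun w hwv => ?_⟩
      have hidx : w = i := Fin.ext (by omega)
      rw [hidx]; exact hvi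
    -- presence of the high neighbour forces its position
    have hhipos : (∃ i : Fin (kk.val+1), i.val ≠ i0.val ∧ (ρ i).val = n + 1 + Lstar) →
        i0.val + 1 + Lstar < kk.val + 1 ∧
          ∀ w : Fin (kk.val+1), w.val = i0.val + 1 + Lstar → (ρ w).val = n + 1 + Lstar := by
      rintro ⟨i, hne2, hvi⟩
      have hilt2 := i.isLt
      have hilt : i0.val < i.val := by
        rcases Nat.lt_or_ge i0.val i.val with h|h
        · exact h
        · exfalso
          have := hρv i i0 (by omega)
          omega
      have hival : i.val = i0.val + 1 + Lstar := by
        by_contra hcon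
        rcases Nat.lt_or_ge i.val (i0.val + 1 + Lstar) with h|h
        · have := hbb' i (i.val - i0.val - 1) (by omega) (by omega)
          omega
        · obtain ⟨w1, hw1⟩ : ∃ w : Fin (kk.val+1), w.val = i0.val + Lstar :=
            ⟨⟨_, by omega⟩, rfl⟩
          obtain ⟨w2, hw2⟩ : ∃ w : Fin (kk.val+1), w.val = i0.val + Lstar + 1 :=
            ⟨⟨_, by omega⟩, rfl⟩
          have h1 := hρv w1 w2 (by omega)
          have h2 := hρv w2 i (by omega)
          have h3 := hdown w1 hw1
          omega
      refine ⟨by omega, fun w hwv => ?_⟩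
      have hidx : w = i := Fin.ext (by omega)
      rw [hidx]; exact hvi
    have hnotboth : ¬((∃ i : Fin (kk.val+1), i.val ≠ i0.val ∧ (ρ i).val = n - 1 - Lstar)
        ∧ (∃ i : Fin (kk.val+1), i.val ≠ i0.val ∧ (ρ i).val = n + 1 + Lstar)) := by
      rintro ⟨hplo, hphi⟩
      obtain ⟨hge, hloeq⟩ := hlopos hplo
      obtain ⟨hlt2, hhieq⟩ := hhipos hphi
      apply hnQ
      refine ⟨by omega, by omega, by omega, ?_⟩
      intro j hj
      rcases Nat.lt_or_ge j Lstar with h|h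
      · exact hblock j h
      · have hjeq : j = Lstar := by omega
        subst hjeq
        exact ⟨hloeq _ rfl, fun h => hhieq _ rfl⟩
    -- vanishing of the inner terms
    have hDlo0 : ∀ L, L < Lstar → D (lo L) = 0 := by
      intro L hL
      apply hD0
      obtain ⟨w, hwv⟩ : ∃ w : Fin (kk.val+1), w.val = i0.val - 1 - L := ⟨⟨_, by omega⟩, rfl⟩
      refine ⟨w, by omega, ?_⟩
      have h1 := hbb w L hL hwv
      apply Fin.ext
      rw [hτval w, h1, hloval, if_pos (by omega)]
    have hDhi0 : ∀ L, L < Lstar → D (hi L) = 0 := by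
      intro L hL
      apply hD0
      obtain ⟨w, hwv⟩ : ∃ w : Fin (kk.val+1), w.val = i0.val + 1 + L := ⟨⟨_, by omega⟩, rfl⟩
      refine ⟨w, by omega, ?_⟩
      have h1 := hbb' w L hL hwv
      apply Fin.ext
      rw [hτval w, h1, hhival L (by omega), if_neg (by omega)]
      omega
    have hDlo0' : (∃ i : Fin (kk.val+1), i.val ≠ i0.val ∧ (ρ i).val = n - 1 - Lstar) →
        D (lo Lstar) = 0 := by
      rintro ⟨i, hne2, hvi⟩
      apply hD0
      refine ⟨i, hne2, ?_⟩
      apply Fin.ext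
      rw [hτval i, hvi, hloval, if_pos (by omega)]
    have hDhi0' : (∃ i : Fin (kk.val+1), i.val ≠ i0.val ∧ (ρ i).val = n + 1 + Lstar) →
        D (hi Lstar) = 0 := by
      rintro ⟨i, hne2, hvi⟩
      apply hD0
      refine ⟨i, hne2, ?_⟩
      apply Fin.ext
      rw [hτval i, hvi, hhival Lstar hLlt, if_neg (by omega)]
      omega
    -- the good term, low case
    have hgoodlo : ¬(∃ i : Fin (kk.val+1), i.val ≠ i0.val ∧ (ρ i).val = n - 1 - Lstar) →
        m0 ≤ ε kk * ((-1:ℝ)^Lstar * D (lo Lstar)) := by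
      intro habs
      have hnp : ∀ x : Fin (kk.val+1), x.val ≠ i0.val → (ρ x).val ≠ n - 1 - Lstar :=
        fun x hx hv => habs ⟨x, hx, hv⟩
      obtain ⟨τ', hτ'def⟩ : ∃ t, t = Function.update τ i0 (lo Lstar) := ⟨_, rfl⟩
      have hτ'val : ∀ x : Fin (kk.val+1), (τ' x).val = if x.val = i0.val then n - 1 - Lstar
          else if (ρ x).val < n then (ρ x).val else (ρ x).val - 1 := by
        intro x
        by_cases h : x = i0
        · rw [hτ'def, h, Function.update_self, if_pos rfl, hloval]
        · rw [hτ'def, Function.update_of_ne h, hτval,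
            if_neg (fun hv => h (Fin.ext hv))]
      have hshift := det_shift_back A γ τ' i0 Lstar hLi0
      obtain ⟨g, hgdef⟩ : ∃ g', g' = (fun i : Fin (kk.val+1) =>
          τ' ⟨shiftB i0.val Lstar i.val, shiftB_lt i.isLt i0.isLt⟩) := ⟨_, rfl⟩
      rw [← hgdef] at hshift
      have hgval : ∀ i : Fin (kk.val+1), (g i).val =
          if i.val < i0.val - Lstar then (ρ i).val
          else if i.val ≤ i0.val then n - 1 - Lstar + (i.val - (i0.val - Lstar))
          else (ρ i).val - 1 := by
        intro i
        have hig : g i = τ' ⟨shiftB i0.val Lstar i.val, shiftB_lt i.isLt i0.isLt⟩ := by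
          rw [hgdef]
        have hilt := i.isLt
        rcases Nat.lt_or_ge i.val (i0.val - Lstar) with h1|h1
        · have hidx : (⟨shiftB i0.val Lstar i.val, shiftB_lt i.isLt i0.isLt⟩
              : Fin (kk.val+1)) = i := Fin.ext (by
            show shiftB i0.val Lstar i.val = i.val
            unfold shiftB; split_ifs <;> omega)
          rw [hig, hidx, hτ'val]
          have hlt := hρv i i0 (by omega)
          split_ifs <;> omega
        · rcases Nat.lt_or_ge i0.val i.val with h2|h2
          · -- zone 3
            have hidx : (⟨shiftB i0.val Lstar i.val, shiftB_lt i.isLt i0.isLt⟩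
                : Fin (kk.val+1)) = i := Fin.ext (by
              show shiftB i0.val Lstar i.val = i.val
              unfold shiftB; split_ifs <;> omega)
            rw [hig, hidx, hτ'val]
            have hgt := hρv i0 i (by omega)
            split_ifs <;> omega
          · rcases Nat.eq_or_lt_of_le h1 with h3|h3
            · -- zone 2a : i.val = i0.val - Lstar, maps to i0
              have hidx : (⟨shiftB i0.val Lstar i.val, shiftB_lt i.isLt i0.isLt⟩
                  : Fin (kk.val+1)) = i0 := Fin.ext (by
                show shiftB i0.val Lstar i.val = i0.val
                unfold shiftB; split_ifs <;> omega)
              rw [hig, hidx, hτ'val]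
              split_ifs <;> omega
            · -- zone 2b : i0.val - Lstar < i.val ≤ i0.val, maps to i.val - 1
              obtain ⟨w, hwv⟩ : ∃ w : Fin (kk.val+1), w.val = i.val - 1 := ⟨⟨_, by omega⟩, rfl⟩
              have hidx : (⟨shiftB i0.val Lstar i.val, shiftB_lt i.isLt i0.isLt⟩
                  : Fin (kk.val+1)) = w := Fin.ext (by
                show shiftB i0.val Lstar i.val = w.val
                unfold shiftB; split_ifs <;> omega)
              rw [hig, hidx, hτ'val]
              have hbw := hbb w (i0.val - i.val) (by omega) (by omega)
              split_ifs <;> omega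
      have hg : StrictMono g := by
        rw [Fin.strictMono_iff_lt_succ]
        intro i
        have hcsv : (i.castSucc).val = i.val := rfl
        have hsuv : (i.succ).val = i.val + 1 := rfl
        have hilt := i.isLt
        rw [Fin.lt_def, hgval i.castSucc, hgval i.succ]
        have f1 := hρv i.castSucc i.succ (by omega)
        have d2 : i.val + 1 ≠ i0.val - Lstar ∨ (ρ i.succ).val = n - Lstar := by
          rcases eq_or_ne (i.val+1) (i0.val - Lstar) with h|h
          · exact Or.inr (hup i.succ (by omega))
          · exact Or.inl h
        have d3 : i.val = i0.val ∨ (ρ i.castSucc).val ≠ n - 1 - Lstar := by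
          rcases eq_or_ne i.val i0.val with h|h
          · exact Or.inl h
          · exact Or.inr (hnp i.castSucc (by omega))
        have d4 : i.val + 1 ≤ i0.val ∨ n < (ρ i.succ).val := by
          rcases Nat.lt_or_ge i0.val (i.val+1) with h|h
          · have := hρv i0 i.succ (by omega); omega
          · exact Or.inl h
        have d5 : i.val ≤ i0.val ∨ n < (ρ i.castSucc).val := by
          rcases Nat.lt_or_ge i0.val i.val with h|h
          · have := hρv i0 i.castSucc (by omega); omega
          · exact Or.inl h
        split_ifs <;> omega
      have hDeq : D (lo Lstar) = (A.submatrix τ' γ).det := by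
        rw [hDdef]
        show ((A.submatrix τ γ).updateRow i0 fun j => A (lo Lstar) (γ j)).det
          = (A.submatrix τ' γ).det
        rw [hDsub (lo Lstar), ← hτ'def]
      have hm := hm0le kk g γ hg hγ
      rw [hDeq, hshift]
      have hev : ((-1:ℝ)^Lstar * ((-1:ℝ)^Lstar * (A.submatrix g γ).det))
          = (A.submatrix g γ).det := by
        rw [← mul_assoc, ← pow_add]
        rw [Even.neg_one_pow ⟨Lstar, by ring⟩, one_mul]
      rw [hev]
      exact hm
    -- the good term, high case
    have hgoodhi : ¬(∃ i : Fin (kk.val+1), i.val ≠ i0.val ∧ (ρ i).val = n + 1 + Lstar) →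
        m0 ≤ ε kk * ((-1:ℝ)^Lstar * D (hi Lstar)) := by
      intro habs
      have hnp : ∀ x : Fin (kk.val+1), x.val ≠ i0.val → (ρ x).val ≠ n + 1 + Lstar :=
        fun x hx hv => habs ⟨x, hx, hv⟩
      obtain ⟨τ', hτ'def⟩ : ∃ t, t = Function.update τ i0 (hi Lstar) := ⟨_, rfl⟩
      have hτ'val : ∀ x : Fin (kk.val+1), (τ' x).val = if x.val = i0.val then n + Lstar
          else if (ρ x).val < n then (ρ x).val else (ρ x).val - 1 := by
        intro x
        by_cases h : x = i0
        · rw [hτ'def, h, Function.update_self, if_pos rfl, hhival Lstar hLlt]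
        · rw [hτ'def, Function.update_of_ne h, hτval,
            if_neg (fun hv => h (Fin.ext hv))]
      have hshift := det_shift_fwd A γ τ' i0 Lstar hLk
      obtain ⟨g, hgdef⟩ : ∃ g', g' = (fun i : Fin (kk.val+1) =>
          τ' ⟨shiftF i0.val Lstar i.val, shiftF_lt i.isLt hLk⟩) := ⟨_, rfl⟩
      rw [← hgdef] at hshift
      have hgval : ∀ i : Fin (kk.val+1), (g i).val =
          if i.val < i0.val then (ρ i).val
          else if i.val ≤ i0.val + Lstar then n + (i.val - i0.val)
          else (ρ i).val - 1 := by
        intro i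
        have hig : g i = τ' ⟨shiftF i0.val Lstar i.val, shiftF_lt i.isLt hLk⟩ := by
          rw [hgdef]
        have hilt := i.isLt
        rcases Nat.lt_or_ge i.val i0.val with h1|h1
        · have hidx : (⟨shiftF i0.val Lstar i.val, shiftF_lt i.isLt hLk⟩
              : Fin (kk.val+1)) = i := Fin.ext (by
            show shiftF i0.val Lstar i.val = i.val
            unfold shiftF; split_ifs <;> omega)
          rw [hig, hidx, hτ'val]
          have hlt := hρv i i0 (by omega)
          split_ifs <;> omega
        · rcases Nat.lt_or_ge (i0.val + Lstar) i.val with h2|h2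
          · -- zone 3
            have hidx : (⟨shiftF i0.val Lstar i.val, shiftF_lt i.isLt hLk⟩
                : Fin (kk.val+1)) = i := Fin.ext (by
              show shiftF i0.val Lstar i.val = i.val
              unfold shiftF; split_ifs <;> omega)
            rw [hig, hidx, hτ'val]
            have hgt := hρv i0 i (by omega)
            split_ifs <;> omega
          · rcases Nat.eq_or_lt_of_le h2 with h3|h3
            · -- i.val = i0.val + Lstar : maps to i0
              have hidx : (⟨shiftF i0.val Lstar i.val, shiftF_lt i.isLt hLk⟩
                  : Fin (kk.val+1)) = i0 := Fin.ext (by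
                show shiftF i0.val Lstar i.val = i0.val
                unfold shiftF; split_ifs <;> omega)
              rw [hig, hidx, hτ'val]
              split_ifs <;> omega
            · -- i0.val ≤ i.val < i0.val + Lstar : maps to i.val + 1
              obtain ⟨w, hwv⟩ : ∃ w : Fin (kk.val+1), w.val = i.val + 1 := ⟨⟨_, by omega⟩, rfl⟩
              have hidx : (⟨shiftF i0.val Lstar i.val, shiftF_lt i.isLt hLk⟩
                  : Fin (kk.val+1)) = w := Fin.ext (by
                show shiftF i0.val Lstar i.val = w.val
                unfold shiftF; split_ifs <;> omega)
              rw [hig, hidx, hτ'val]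
              have hbw := hbb' w (i.val - i0.val) (by omega) (by omega)
              split_ifs <;> omega
      have hg : StrictMono g := by
        rw [Fin.strictMono_iff_lt_succ]
        intro i
        have hcsv : (i.castSucc).val = i.val := rfl
        have hsuv : (i.succ).val = i.val + 1 := rfl
        have hilt := i.isLt
        rw [Fin.lt_def, hgval i.castSucc, hgval i.succ]
        have f1 := hρv i.castSucc i.succ (by omega)
        have e2 : i.val ≠ i0.val + Lstar ∨ (ρ i.castSucc).val = n + Lstar := by
          rcases eq_or_ne i.val (i0.val + Lstar) with h|h
          · exact Or.inr (hdown i.castSucc (by omega))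
          · exact Or.inl h
        have e3 : i.val + 1 = i0.val ∨ (ρ i.succ).val ≠ n + 1 + Lstar := by
          rcases eq_or_ne (i.val + 1) i0.val with h|h
          · exact Or.inl h
          · exact Or.inr (hnp i.succ (by omega))
        have e4 : i0.val ≤ i.val ∨ (ρ i.castSucc).val < n := by
          rcases Nat.lt_or_ge i.val i0.val with h|h
          · have := hρv i.castSucc i0 (by omega); omega
          · exact Or.inl h
        have e6 : i.val ≤ i0.val ∨ n < (ρ i.castSucc).val := by
          rcases Nat.lt_or_ge i0.val i.val with h|h
          · have := hρv i0 i.castSucc (by omega); omega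
          · exact Or.inl h
        have e7 : i.val + 1 ≤ i0.val ∨ n < (ρ i.succ).val := by
          rcases Nat.lt_or_ge i0.val (i.val + 1) with h|h
          · have := hρv i0 i.succ (by omega); omega
          · exact Or.inl h
        split_ifs <;> omega
      have hDeq : D (hi Lstar) = (A.submatrix τ' γ).det := by
        rw [hDdef]
        show ((A.submatrix τ γ).updateRow i0 fun j => A (hi Lstar) (γ j)).det
          = (A.submatrix τ' γ).det
        rw [hDsub (hi Lstar), ← hτ'def]
      have hm := hm0le kk g γ hg hγ
      rw [hDeq, hshift]
      have hev : ((-1:ℝ)^Lstar * ((-1:ℝ)^Lstar * (A.submatrix g γ).det))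
          = (A.submatrix g γ).det := by
        rw [← mul_assoc, ← pow_add]
        rw [Even.neg_one_pow ⟨Lstar, by ring⟩, one_mul]
      rw [hev]
      exact hm
    -- assembling the estimate
    have hεabs : |ε kk| = 1 := by rcases hε kk with h|h <;> rw [h] <;> norm_num
    rw [key2, Finset.mul_sum]
    have htlow : ∀ L ∈ Finset.range n,
        (if L < Lstar then (0:ℝ) else if L = Lstar then δ^Lstar * m0 else -(2*M*δ^L))
          ≤ ε kk * ((-δ)^L * (D (lo L) + D (hi L))) := by
      intro L hL
      rw [Finset.mem_range] at hL
      rcases Nat.lt_trichotomy L Lstar with h|h|h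
      · rw [if_pos h, hDlo0 L h, hDhi0 L h]
        simp
      · rw [if_neg (by omega), if_pos h]
        subst h
        have hsp : ((-δ)^L : ℝ) = (-1)^L * δ^L := by
          rw [neg_pow]
        have hp := pow_pos hδ0 L
        by_cases hplo : (∃ i : Fin (kk.val+1), i.val ≠ i0.val ∧ (ρ i).val = n - 1 - L)
        · have hphi : ¬(∃ i : Fin (kk.val+1), i.val ≠ i0.val ∧ (ρ i).val = n + 1 + L) :=
            fun h2 => hnotboth ⟨hplo, h2⟩
          have h1 : D (lo L) = 0 := hDlo0' hplo
          have h2 := hgoodhi hphi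
          have h3 := mul_le_mul_of_nonneg_left h2 hp.le
          rw [h1, hsp]
          nlinarith [h3]
        · by_cases hphi : (∃ i : Fin (kk.val+1), i.val ≠ i0.val ∧ (ρ i).val = n + 1 + L)
          · have h1 : D (hi L) = 0 := hDhi0' hphi
            have h2 := hgoodlo hplo
            have h3 := mul_le_mul_of_nonneg_left h2 hp.le
            rw [h1, hsp]
            nlinarith [h3]
          · have h2 := hgoodlo hplo
            have h2' := hgoodhi hphi
            have h3 := mul_le_mul_of_nonneg_left h2 hp.le
            have h3' := mul_le_mul_of_nonneg_left h2' hp.le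
            have hm0n : 0 ≤ δ^L * m0 := by positivity
            rw [hsp]
            nlinarith [h3, h3']
      · rw [if_neg (by omega), if_neg (by omega)]
        have hb : |D (lo L) + D (hi L)| ≤ 2*M :=
          (abs_add_le _ _).trans (by linarith [hDM (lo L), hDM (hi L)])
        have habs2 : |ε kk * ((-δ)^L * (D (lo L) + D (hi L)))| ≤ 2*M*δ^L := by
          rw [abs_mul, abs_mul, hεabs, one_mul, abs_pow, abs_neg, abs_of_pos hδ0]
          have hp : (0:ℝ) ≤ δ^L := (pow_pos hδ0 L).le
          calc δ^L * |D (lo L) + D (hi L)| ≤ δ^L * (2*M) :=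
                mul_le_mul_of_nonneg_left hb hp
            _ = 2*M*δ^L := by ring
        linarith [neg_abs_le (ε kk * ((-δ)^L * (D (lo L) + D (hi L)))), habs2]
    have hgeo : ∑ L ∈ Finset.Ico (Lstar+1) n, δ^L ≤ 2*δ^(Lstar+1) := by
      rw [Finset.sum_Ico_eq_sum_range]
      have hrw : ∀ i ∈ Finset.range (n-(Lstar+1)), δ^(Lstar+1+i) = δ^(Lstar+1) * δ^i :=
        fun i _ => pow_add δ _ i
      rw [Finset.sum_congr rfl hrw, ← Finset.mul_sum]
      have := geom_half_le hδ0.le hδh (n-(Lstar+1))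
      nlinarith [pow_pos hδ0 (Lstar+1)]
    have hL1 : ∑ L ∈ Finset.range (Lstar+1),
        (if L < Lstar then (0:ℝ) else if L = Lstar then δ^Lstar * m0 else -(2*M*δ^L))
          = δ^Lstar * m0 := by
      rw [Finset.sum_range_succ,
        Finset.sum_eq_zero (fun L hL => if_pos (Finset.mem_range.mp hL)),
        if_neg (lt_irrefl _), if_pos rfl, zero_add]
    have hL2 : -(2*M*(2*δ^(Lstar+1))) ≤ ∑ L ∈ Finset.Ico (Lstar+1) n,
        (if L < Lstar then (0:ℝ) else if L = Lstar then δ^Lstar * m0 else -(2*M*δ^L)) := by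
      have heq : ∑ L ∈ Finset.Ico (Lstar+1) n,
          (if L < Lstar then (0:ℝ) else if L = Lstar then δ^Lstar * m0 else -(2*M*δ^L))
            = -(2*M * ∑ L ∈ Finset.Ico (Lstar+1) n, δ^L) := by
        rw [Finset.mul_sum, ← Finset.sum_neg_distrib]
        refine Finset.sum_congr rfl (fun L hL => ?_)
        rw [Finset.mem_Ico] at hL
        rw [if_neg (by omega), if_neg (by omega)]
      rw [heq]
      have h4 := mul_le_mul_of_nonneg_left hgeo (by linarith : (0:ℝ) ≤ 2*M)
      linarith
    have hsplit : ∑ L ∈ Finset.range (Lstar+1),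
          (if L < Lstar then (0:ℝ) else if L = Lstar then δ^Lstar * m0 else -(2*M*δ^L))
        + ∑ L ∈ Finset.Ico (Lstar+1) n,
          (if L < Lstar then (0:ℝ) else if L = Lstar then δ^Lstar * m0 else -(2*M*δ^L))
        = ∑ L ∈ Finset.range n,
          (if L < Lstar then (0:ℝ) else if L = Lstar then δ^Lstar * m0 else -(2*M*δ^L)) := by
      rw [Finset.range_eq_Ico, Finset.range_eq_Ico]
      exact Finset.sum_Ico_consecutive _ (by omega) (by omega)
    have hfin : 0 < δ^Lstar * m0 - 2*M*(2*δ^(Lstar+1)) := by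
      have hps : δ^(Lstar+1) = δ^Lstar * δ := pow_succ δ Lstar
      have hp := pow_pos hδ0 Lstar
      rw [hps]
      nlinarith [mul_pos hp (show (0:ℝ) < m0 - 4*M*δ by linarith)]
    calc (0:ℝ) < δ^Lstar * m0 - 2*M*(2*δ^(Lstar+1)) := hfin
      _ ≤ ∑ L ∈ Finset.range n,
          (if L < Lstar then (0:ℝ) else if L = Lstar then δ^Lstar * m0 else -(2*M*δ^L)) := by
            rw [← hsplit, hL1]; linarith
      _ ≤ ∑ L ∈ Finset.range n, ε kk * ((-δ)^L * (D (lo L) + D (hi L))) :=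
            Finset.sum_le_sum htlow
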